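/- Let (E, V) be an affine space over a field F with V finite-dimensional, and let f : E → E be an affine map with linear part f̄. Then every nonempty affine subspace s of E that is invariant under f (f maps s into s) has dimension at least τ(f): the dimension of the direction of s is ≥ τ(f). -/

import Mathlib

variable {F V E : Type*} [Field F] [AddCommGroup V] [Module F V] [AddTorsor V E]

/-- `τ(α, L)`: the smallest `k ∈ ℕ` such that
`α ∈ range (L - id) + ker ((L - id)^k)`. -/
noncomputable def tau (L : V →ₗ[F] V) (α : V) : ℕ :=
  sInf {k : ℕ | α ∈ LinearMap.range (L - LinearMap.id : V →ₗ[F] V) ⊔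
    LinearMap.ker ((L - LinearMap.id : V →ₗ[F] V) ^ k)}

/-- `τ(f)` for an affine map `f : E → E`: `τ(f(A) -ᵥ A, f.linear)` for a point `A`
(this does not depend on the choice of `A`). -/
noncomputable def tauAff (f : E →ᵃ[F] E) : ℕ :=
  tau f.linear (f (Classical.arbitrary E) -ᵥ (Classical.arbitrary E))

/-- Every nonempty affine subspace of `E` invariant under `f` has
dimension (the dimension of its direction) at least `τ(f)`. -/
theorem tau_le_dim_invariant_flat
    [FiniteDimensional F V] (f : E →ᵃ[F] E) (s : AffineSubspace F E)
    (hne : (s : Set E).Nonempty) (hinv : ∀ P ∈ s, f P ∈ s) :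
    tauAff f ≤ Module.finrank F s.direction := by
  classical
  obtain ⟨A, hA⟩ := hne
  set N : V →ₗ[F] V := f.linear - LinearMap.id with hN
  set W := s.direction with hW
  set d := Module.finrank F W with hd
  set α : V := f A -ᵥ A with hα
  -- W is invariant under N
  have hLW : ∀ v ∈ W, f.linear v ∈ W := by
    intro v hv
    obtain ⟨B, hB, C, hC, rfl⟩ := (AffineSubspace.mem_direction_iff_eq_vsub ⟨A, hA⟩ v).mp hv
    rw [f.linearMap_vsub]
    exact AffineSubspace.vsub_mem_direction (hinv _ hB) (hinv _ hC)
  have hNW : ∀ v ∈ W, N v ∈ W := by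
    intro v hv
    simpa [hN, LinearMap.sub_apply] using W.sub_mem (hLW v hv) hv
  have hαW : α ∈ W := AffineSubspace.vsub_mem_direction (hinv _ hA) hA
  -- restriction of N to W
  set N' : W →ₗ[F] W := N.restrict hNW with hN'
  -- Fitting: W = ker (N'^d) ⊔ range (N'^d)
  have hfit : (⊤ : Submodule F W) ≤
      LinearMap.ker (N' ^ d) ⊔ LinearMap.range (N' ^ d) := by
    have h := (LinearMap.isCompl_iSup_ker_pow_iInf_range_pow N').codisjoint
    have h1 : (⨆ n, LinearMap.ker (N' ^ n)) ≤ LinearMap.ker (N' ^ d) :=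
      iSup_le fun n => Module.End.ker_pow_le_ker_pow_finrank N' n
    have h2 : (⨅ n, LinearMap.range (N' ^ n)) ≤ LinearMap.range (N' ^ d) :=
      iInf_le _ d
    calc (⊤ : Submodule F W) ≤ (⨆ n, LinearMap.ker (N' ^ n)) ⊔
          (⨅ n, LinearMap.range (N' ^ n)) := h.top_le
      _ ≤ _ := sup_le_sup h1 h2
  -- decompose α
  obtain ⟨w, hw, r, hr, hwr⟩ :=
    Submodule.mem_sup.mp (hfit (Submodule.mem_top (x := (⟨α, hαW⟩ : W))))
  -- key membership at level V
  have key : α ∈ LinearMap.range N ⊔ LinearMap.ker (N ^ d) := by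
    have hrestr : N' ^ d = (N ^ d).restrict
        (Module.End.pow_apply_mem_of_forall_mem d hNW) :=
      Module.End.pow_restrict d hNW
    rcases Nat.eq_zero_or_pos d with hd0 | hdpos
    · -- d = 0 : W = ⊥, α = 0
      have hWbot : W = ⊥ := Submodule.finrank_eq_zero.mp (hd.symm.trans hd0)
      have hα0 : α = 0 := by simpa [hWbot] using hαW
      rw [hα0]; exact Submodule.zero_mem _
    · -- d ≥ 1 : r ∈ range N, w ∈ ker (N^d)
      obtain ⟨x, hx⟩ := hr
      have hα_eq : α = (w : V) + (r : V) := by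
        have := congrArg (Subtype.val) hwr
        simpa using this.symm
      have hwker : (w : V) ∈ LinearMap.ker (N ^ d) := by
        have : (N' ^ d) w = 0 := hw
        rw [hrestr] at this
        have := congrArg (Subtype.val) this
        simpa [LinearMap.restrict_apply] using this
      have hrrange : (r : V) ∈ LinearMap.range N := by
        have hx' := congrArg (Subtype.val) hx
        rw [hrestr] at hx'
        simp only [LinearMap.restrict_apply] at hx'
        obtain ⟨d', hd'⟩ := Nat.exists_eq_add_of_lt hdpos
        rw [hd'] at hx'
        refine ⟨(N ^ (0 + d')) (x : V), ?_⟩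
        rw [← hx']
        simp [pow_succ', Module.End.mul_apply]
      rw [hα_eq, add_comm]
      exact Submodule.add_mem_sup hrrange hwker
  -- transfer to the arbitrary base point used in `tauAff`
  set A₀ := Classical.arbitrary E
  have hdiff : f A₀ -ᵥ A₀ - α ∈ LinearMap.range N := by
    refine ⟨A₀ -ᵥ A, ?_⟩
    simp only [hN, hα, LinearMap.sub_apply, LinearMap.id_apply, f.linearMap_vsub]
    rw [vsub_sub_vsub_comm]
  have key' : f A₀ -ᵥ A₀ ∈ LinearMap.range N ⊔ LinearMap.ker (N ^ d) := by
    have : f A₀ -ᵥ A₀ = (f A₀ -ᵥ A₀ - α) + α := by abel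
    rw [this]
    exact Submodule.add_mem _ (Submodule.mem_sup_left hdiff) key
  exact Nat.sInf_le key'
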